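/- Fix N ≥ 2 and local dimensions d : Fin N → ℕ with d i ≥ 1, and let V = Π (i : Fin N), Fin (d i). For k : Fin N → Bool, define the partial transpose M^{T_k} of M : Matrix V V ℂ over the subset {i | k i = true} by M^{T_k}(v,w) = M(v',w') where v' i = (if k i then w i else v i) and w' i = (if k i then v i else w i). Say ψ : V → ℂ is product across k (for k not constantly false and not constantly true) if there exist functions a : ({i // k i = true} → ℂ-indexed tuples) → ℂ and b on the complementary coordinates with ψ(v) = a(v restricted to {i | k i = true}) · b(v restricted to {i | k i = false}) for all v. Suppose ψ is a unit vector that is genuinely multipartite entangled, i.e. for every k : Fin N → Bool with k ≠ (fun _ => false) and k ≠ (fun _ => true), ψ is not product across k. Suppose ϱ : (Fin N → Bool) → Matrix V V ℂ is a family of positive semidefinite matrices such that the rank-one projector Ψ(v,w) = ψ(v)·conj(ψ(w)) satisfies Ψ = ∑_{k} (ϱ k)^{T_k}. Then ϱ k = 0 for every k with k ≠ (fun _ => false) and k ≠ (fun _ => true); moreover there exists p ∈ [0,1] with ϱ (fun _ => false) = p • Ψ and ϱ (fun _ => true) = (1 − p) • Ψᵀ. -/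

import Mathlib

open Matrix BigOperators ComplexOrder

/-- Partial transpose of a multipartite matrix over the subset of parties where `k` is `true`. -/
def ptK {N : ℕ} {d : Fin N → ℕ} (k : Fin N → Bool)
    (M : Matrix (∀ i, Fin (d i)) (∀ i, Fin (d i)) ℂ) :
    Matrix (∀ i, Fin (d i)) (∀ i, Fin (d i)) ℂ :=
  fun v w => M (fun i => if k i then w i else v i) (fun i => if k i then v i else w i)

/-- `ψ` is product across the bipartition `{i | k i = true} | {i | k i = false}`. -/
def ProductAcross {N : ℕ} {d : Fin N → ℕ} (k : Fin N → Bool)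
    (ψ : (∀ i, Fin (d i)) → ℂ) : Prop :=
  ∃ (a : (∀ i : {i : Fin N // k i = true}, Fin (d i.1)) → ℂ)
    (b : (∀ i : {i : Fin N // k i = false}, Fin (d i.1)) → ℂ),
    ∀ v, ψ v = a (fun i => v i.1) * b (fun i => v i.1)

section aux
variable {N : ℕ} {d : Fin N → ℕ}

/-- merge a tuple on the `true` part with a tuple on the `false` part -/
def mK (k : Fin N → Bool) (a : ∀ i : {i : Fin N // k i = true}, Fin (d i.1))
    (b : ∀ i : {i : Fin N // k i = false}, Fin (d i.1)) : ∀ i, Fin (d i) :=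
  fun i => if h : k i = true then a ⟨i, h⟩ else b ⟨i, by simpa using h⟩

lemma mK_restrict (k : Fin N → Bool) (v : ∀ i, Fin (d i)) :
    mK k (fun i => v i.1) (fun i => v i.1) = v := by
  funext i; unfold mK; split <;> rfl

lemma ptK_mK (k : Fin N → Bool) (M : Matrix (∀ i, Fin (d i)) (∀ i, Fin (d i)) ℂ)
    (a c : ∀ i : {i : Fin N // k i = true}, Fin (d i.1))
    (b e : ∀ i : {i : Fin N // k i = false}, Fin (d i.1)) :
    ptK k M (mK k a b) (mK k c e) = M (mK k c b) (mK k a e) := by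
  unfold ptK
  congr 1 <;> funext i <;> by_cases h : k i = true <;> simp [mK, h]

/-- the merging equivalence -/
def eK (k : Fin N → Bool) :
    ((∀ i : {i : Fin N // k i = true}, Fin (d i.1)) ×
      (∀ i : {i : Fin N // k i = false}, Fin (d i.1))) ≃ (∀ i, Fin (d i)) where
  toFun p := mK k p.1 p.2
  invFun v := (fun i => v i.1, fun i => v i.1)
  left_inv := by
    rintro ⟨a, b⟩
    refine Prod.ext ?_ ?_ <;> funext i <;> simp [mK, i.2]
  right_inv v := mK_restrict k v

lemma sum_mK (k : Fin N → Bool) {M : Type*} [AddCommMonoid M] (f : (∀ i, Fin (d i)) → M) :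
    ∑ v, f v = ∑ a, ∑ b, f (mK k a b) := by
  have h := Fintype.sum_equiv (eK k) (fun p => f (mK k p.1 p.2)) f (fun p => rfl)
  rw [← h, Fintype.sum_prod_type]

lemma ptK_trace (k : Fin N → Bool) (M : Matrix (∀ i, Fin (d i)) (∀ i, Fin (d i)) ℂ) :
    (ptK k M).trace = M.trace := by
  unfold Matrix.trace ptK
  congr 1; funext v; simp [Matrix.diag]

/-- the pair-swap equivalence -/
def swK (k : Fin N → Bool) :
    ((∀ i, Fin (d i)) × (∀ i, Fin (d i))) ≃ ((∀ i, Fin (d i)) × (∀ i, Fin (d i))) where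
  toFun p := (fun i => if k i then p.1 i else p.2 i, fun i => if k i then p.2 i else p.1 i)
  invFun p := (fun i => if k i then p.1 i else p.2 i, fun i => if k i then p.2 i else p.1 i)
  left_inv := by rintro ⟨v, w⟩; refine Prod.ext ?_ ?_ <;> funext i <;> by_cases h : k i = true <;> simp [h]
  right_inv := by rintro ⟨v, w⟩; refine Prod.ext ?_ ?_ <;> funext i <;> by_cases h : k i = true <;> simp [h]

lemma trace_mul_ptK (k : Fin N → Bool) (A B : Matrix (∀ i, Fin (d i)) (∀ i, Fin (d i)) ℂ) :
    (A * ptK k B).trace = (ptK k A * B).trace := by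
  unfold Matrix.trace
  simp only [Matrix.diag, Matrix.mul_apply]
  rw [Finset.sum_comm]
  rw [← Fintype.sum_prod_type']
  rw [← Fintype.sum_prod_type']
  refine Fintype.sum_equiv (swK k) _ _ ?_
  rintro ⟨v, w⟩
  simp only [swK, Equiv.coe_fn_mk, ptK]
  congr 2 <;> funext i <;> by_cases h : k i = true <;> simp [h]


/-- the bipartite "column" operator -/
noncomputable def CK (k : Fin N → Bool) (ψ x : (∀ i, Fin (d i)) → ℂ)
    (b e : ∀ i : {i : Fin N // k i = false}, Fin (d i.1)) : ℂ :=
  ∑ c, ψ (mK k c b) * x (mK k c e)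

lemma S_eq (k : Fin N → Bool) (ψ x : (∀ i, Fin (d i)) → ℂ) :
    star x ⬝ᵥ (ptK k (Matrix.of fun v w => ψ v * (starRingEnd ℂ) (ψ w))) *ᵥ x
      = ∑ b, ∑ e, CK k ψ x b e * (starRingEnd ℂ) (CK k ψ x e b) := by
  unfold CK
  simp only [dotProduct, mulVec, Pi.star_apply, RCLike.star_def, sum_mK k, ptK_mK,
    Matrix.of_apply, map_sum, _root_.map_mul, Finset.mul_sum, Finset.sum_mul]
  rw [Finset.sum_comm]
  refine Finset.sum_congr rfl fun b _ => ?_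
  refine ((Finset.sum_congr rfl fun a _ => Finset.sum_comm).trans ?_)
  refine Finset.sum_comm.trans ?_
  refine Finset.sum_congr rfl fun e _ => Finset.sum_congr rfl fun a _ =>
    Finset.sum_congr rfl fun c _ => by ring


lemma eucl_norm_sq {ι : Type*} [Fintype ι] (u : EuclideanSpace ℂ ι) :
    ‖u‖ ^ 2 = ∑ i, Complex.normSq (u i) := by
  rw [EuclideanSpace.norm_eq, Real.sq_sqrt (by positivity)]
  simp [Complex.sq_norm]

noncomputable def toE {ι : Type*} [Fintype ι] (f : ι → ℂ) : EuclideanSpace ℂ ι :=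
  (WithLp.equiv 2 (ι → ℂ)).symm f

@[simp] lemma toE_apply {ι : Type*} [Fintype ι] (f : ι → ℂ) (i : ι) : toE f i = f i := rfl

lemma cs_inner_eq {ι : Type*} [Fintype ι] (p q : ι → ℂ) :
    (inner ℂ (toE fun i => (starRingEnd ℂ) (p i))
      (toE q) : ℂ) = ∑ i, p i * q i := by
  simp [PiLp.inner_apply, RCLike.inner_apply, mul_comm]

lemma cs_aux {ι : Type*} [Fintype ι] (p q : ι → ℂ) :
    ‖∑ i, p i * q i‖ ^ 2
      ≤ (∑ i, Complex.normSq (p i)) * (∑ i, Complex.normSq (q i)) := by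
  have h := norm_inner_le_norm (𝕜 := ℂ)
    (toE fun i => (starRingEnd ℂ) (p i)) (toE q)
  have h3 := pow_le_pow_left₀ (norm_nonneg _) h 2
  rw [cs_inner_eq, mul_pow, eucl_norm_sq, eucl_norm_sq] at h3
  simpa [Complex.normSq_conj] using h3

lemma cs_aux_eq {ι : Type*} [Fintype ι] (p q : ι → ℂ) (hq : ∃ i, q i ≠ 0)
    (h : ‖∑ i, p i * q i‖ ^ 2
      = (∑ i, Complex.normSq (p i)) * (∑ i, Complex.normSq (q i))) :
    ∃ t : ℂ, ∀ i, p i = t * (starRingEnd ℂ) (q i) := by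
  by_cases hp : ∀ i, p i = 0
  · exact ⟨0, fun i => by rw [hp i, zero_mul]⟩
  · push_neg at hp
    obtain ⟨i₀, hi₀⟩ := hp
    obtain ⟨j₀, hj₀⟩ := hq
    have hu0 : (toE fun i => (starRingEnd ℂ) (p i)) ≠ 0 := by
      intro h0
      have : (starRingEnd ℂ) (p i₀) = 0 := by simpa using congrArg (fun u => u i₀) h0
      exact hi₀ (by simpa using this)
    have hw0 : (toE q) ≠ 0 := by
      intro h0
      exact hj₀ (by simpa using congrArg (fun u => u j₀) h0)
    have hnorm : ‖(inner ℂ (toE fun i => (starRingEnd ℂ) (p i))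
        (toE q) : ℂ)‖
        = ‖(toE fun i => (starRingEnd ℂ) (p i))‖
          * ‖(toE q)‖ := by
      have e1 : ‖(inner ℂ (toE fun i => (starRingEnd ℂ) (p i))
          (toE q) : ℂ)‖ ^ 2
          = (‖(toE fun i => (starRingEnd ℂ) (p i))‖
            * ‖(toE q)‖) ^ 2 := by
        rw [cs_inner_eq, mul_pow, eucl_norm_sq, eucl_norm_sq, h]
        simp [Complex.normSq_conj]
      have := congrArg Real.sqrt e1
      rwa [Real.sqrt_sq (norm_nonneg _), Real.sqrt_sq (by positivity)] at this
    obtain ⟨r, hr0, hrw⟩ := (norm_inner_eq_norm_iff hu0 hw0).mp hnorm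
    refine ⟨((starRingEnd ℂ) r)⁻¹, fun i => ?_⟩
    have hqi : q i = r * (starRingEnd ℂ) (p i) := by
      have := congrArg (fun u => u i) hrw
      simpa using this
    have h5 : (starRingEnd ℂ) (q i) = (starRingEnd ℂ) r * p i := by
      rw [hqi, _root_.map_mul, Complex.conj_conj]
    rw [h5, ← mul_assoc, inv_mul_cancel₀ (by simpa using hr0), one_mul]


noncomputable def psiM (ψ : (∀ i, Fin (d i)) → ℂ) :
    Matrix (∀ i, Fin (d i)) (∀ i, Fin (d i)) ℂ :=
  Matrix.of fun v w => ψ v * (starRingEnd ℂ) (ψ w)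

lemma abs_S_le (k : Fin N → Bool) (ψ x : (∀ i, Fin (d i)) → ℂ) :
    ‖star x ⬝ᵥ (ptK k (psiM ψ)) *ᵥ x‖
      ≤ ∑ b, ∑ e, Complex.normSq (CK k ψ x b e) := by
  rw [psiM, S_eq]
  calc ‖∑ b, ∑ e, CK k ψ x b e * (starRingEnd ℂ) (CK k ψ x e b)‖
      ≤ ∑ b, ‖∑ e, CK k ψ x b e * (starRingEnd ℂ) (CK k ψ x e b)‖ :=
        norm_sum_le _ _
    _ ≤ ∑ b, ∑ e, ‖CK k ψ x b e * (starRingEnd ℂ) (CK k ψ x e b)‖ :=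
        Finset.sum_le_sum fun b _ => norm_sum_le _ _
    _ = ∑ b, ∑ e, ‖CK k ψ x b e‖ * ‖CK k ψ x e b‖ := by
        simp [_root_.map_mul, Complex.norm_conj]
    _ ≤ ∑ b, ∑ e, ((‖CK k ψ x b e‖) ^ 2 + (‖CK k ψ x e b‖) ^ 2) / 2 := by
        refine Finset.sum_le_sum fun b _ => Finset.sum_le_sum fun e _ => ?_
        nlinarith [sq_nonneg (‖CK k ψ x b e‖ - ‖CK k ψ x e b‖)]
    _ = ∑ b, ∑ e, Complex.normSq (CK k ψ x b e) := by
        have hsw : ∑ b, ∑ e, (‖CK k ψ x e b‖) ^ 2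
            = ∑ b, ∑ e, (‖CK k ψ x b e‖) ^ 2 := Finset.sum_comm
        have hstep : ∀ b : (i : { i // k i = false }) → Fin (d i.1),
            ∑ e, ((‖CK k ψ x b e‖) ^ 2 + (‖CK k ψ x e b‖) ^ 2) / 2
              = (∑ e, (‖CK k ψ x b e‖) ^ 2) / 2
                + (∑ e, (‖CK k ψ x e b‖) ^ 2) / 2 := fun b => by
          simp only [add_div, Finset.sum_add_distrib, Finset.sum_div]
        rw [Finset.sum_congr rfl fun b _ => hstep b, Finset.sum_add_distrib,
          ← Finset.sum_div, ← Finset.sum_div, hsw]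
        simp only [← Complex.sq_norm]
        ring

lemma sumC_le (k : Fin N → Bool) (ψ x : (∀ i, Fin (d i)) → ℂ) :
    ∑ b, ∑ e, Complex.normSq (CK k ψ x b e)
      ≤ (∑ v, Complex.normSq (ψ v)) * (∑ v, Complex.normSq (x v)) := by
  have hterm : ∀ b e, Complex.normSq (CK k ψ x b e)
      ≤ (∑ c, Complex.normSq (ψ (mK k c b))) * (∑ c, Complex.normSq (x (mK k c e))) := by
    intro b e
    have := cs_aux (fun c => ψ (mK k c b)) (fun c => x (mK k c e))
    simpa [CK, Complex.sq_norm] using this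
  have hP : ∑ b, ∑ c, Complex.normSq (ψ (mK k c b)) = ∑ v, Complex.normSq (ψ v) := by
    rw [sum_mK k (fun v => Complex.normSq (ψ v))]; exact Finset.sum_comm
  have hX : ∑ e, ∑ c, Complex.normSq (x (mK k c e)) = ∑ v, Complex.normSq (x v) := by
    rw [sum_mK k (fun v => Complex.normSq (x v))]; exact Finset.sum_comm
  calc ∑ b, ∑ e, Complex.normSq (CK k ψ x b e)
      ≤ ∑ b, ∑ e, (∑ c, Complex.normSq (ψ (mK k c b))) * (∑ c, Complex.normSq (x (mK k c e))) :=
        Finset.sum_le_sum fun b _ => Finset.sum_le_sum fun e _ => hterm b e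
    _ = (∑ b, ∑ c, Complex.normSq (ψ (mK k c b))) * (∑ e, ∑ c, Complex.normSq (x (mK k c e))) :=
        (Finset.sum_mul_sum _ _ _ _).symm
    _ = _ := by rw [hP, hX]

lemma chainS (k : Fin N → Bool) (ψ x : (∀ i, Fin (d i)) → ℂ)
    (hψ : ∑ v, Complex.normSq (ψ v) = 1) :
    ‖star x ⬝ᵥ (ptK k (psiM ψ)) *ᵥ x‖ ≤ ∑ v, Complex.normSq (x v) := by
  refine (abs_S_le k ψ x).trans ((sumC_le k ψ x).trans ?_)
  rw [hψ, one_mul]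

lemma ptK_psiM_herm (k : Fin N → Bool) (ψ : (∀ i, Fin (d i)) → ℂ) :
    (ptK k (psiM ψ)).IsHermitian := by
  refine Matrix.ext fun v w => ?_
  simp only [Matrix.conjTranspose_apply, ptK, psiM, Matrix.of_apply, star_mul',
    RCLike.star_def, Complex.conj_conj]
  ring

lemma dot_star_self (x : (∀ i, Fin (d i)) → ℂ) :
    star x ⬝ᵥ x = ((∑ v, Complex.normSq (x v) : ℝ) : ℂ) := by
  push_cast
  simp only [dotProduct, Pi.star_apply, RCLike.star_def]
  exact Finset.sum_congr rfl fun v _ => by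
    rw [mul_comm, Complex.mul_conj]

lemma S_real (k : Fin N → Bool) (ψ x : (∀ i, Fin (d i)) → ℂ) :
    (starRingEnd ℂ) (star x ⬝ᵥ (ptK k (psiM ψ)) *ᵥ x)
      = star x ⬝ᵥ (ptK k (psiM ψ)) *ᵥ x := by
  have hH := ptK_psiM_herm (d := d) k ψ
  simp only [dotProduct, mulVec, dotProduct, map_sum, Finset.mul_sum, _root_.map_mul,
    Pi.star_apply, RCLike.star_def, Complex.conj_conj]
  rw [Finset.sum_comm]
  refine Finset.sum_congr rfl fun v _ => Finset.sum_congr rfl fun w _ => ?_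
  have h2 : (starRingEnd ℂ) (ptK k (psiM ψ) w v) = ptK k (psiM ψ) v w := hH.apply v w
  rw [h2]
  ring


lemma one_sub_psd (k : Fin N → Bool) (ψ : (∀ i, Fin (d i)) → ℂ)
    (hψ : ∑ v, Complex.normSq (ψ v) = 1) :
    ((1 : Matrix (∀ i, Fin (d i)) (∀ i, Fin (d i)) ℂ) - ptK k (psiM ψ)).PosSemidef := by
  refine Matrix.PosSemidef.of_dotProduct_mulVec_nonneg ?_ ?_
  · exact Matrix.isHermitian_one.sub (ptK_psiM_herm k ψ)
  · intro x
    have hform : star x ⬝ᵥ ((1 - ptK k (psiM ψ)) *ᵥ x)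
        = ((∑ v, Complex.normSq (x v) : ℝ) : ℂ) - star x ⬝ᵥ (ptK k (psiM ψ)) *ᵥ x := by
      rw [Matrix.sub_mulVec, dotProduct_sub, Matrix.one_mulVec, dot_star_self]
    have hre : ((star x ⬝ᵥ (ptK k (psiM ψ)) *ᵥ x).re : ℂ) = star x ⬝ᵥ (ptK k (psiM ψ)) *ᵥ x :=
      Complex.conj_eq_iff_re.mp (S_real k ψ x)
    have habs : (star x ⬝ᵥ (ptK k (psiM ψ)) *ᵥ x).re ≤ ∑ v, Complex.normSq (x v) :=
      le_trans (Complex.re_le_norm _) (chainS k ψ x hψ)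
    rw [hform, ← hre]
    have hcast : ((∑ v, Complex.normSq (x v) : ℝ) : ℂ)
        - ((star x ⬝ᵥ (ptK k (psiM ψ)) *ᵥ x).re : ℂ)
        = ((∑ v, Complex.normSq (x v) - (star x ⬝ᵥ (ptK k (psiM ψ)) *ᵥ x).re : ℝ) : ℂ) := by
      push_cast; ring
    rw [hcast]
    exact Complex.zero_le_real.mpr (by linarith)

lemma product_of_saturation (k : Fin N → Bool) (ψ x : (∀ i, Fin (d i)) → ℂ)
    (hψ : ∑ v, Complex.normSq (ψ v) = 1) (hx : ∃ v, x v ≠ 0)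
    (hS : star x ⬝ᵥ (ptK k (psiM ψ)) *ᵥ x = ((∑ v, Complex.normSq (x v) : ℝ) : ℂ)) :
    ProductAcross k ψ := by
  have hterm : ∀ b e, Complex.normSq (CK k ψ x b e)
      ≤ (∑ c, Complex.normSq (ψ (mK k c b))) * (∑ c, Complex.normSq (x (mK k c e))) := by
    intro b e
    simpa [CK, Complex.sq_norm] using cs_aux (fun c => ψ (mK k c b)) (fun c => x (mK k c e))
  have hP : ∑ b, ∑ c, Complex.normSq (ψ (mK k c b)) = ∑ v, Complex.normSq (ψ v) := by
    rw [sum_mK k (fun v => Complex.normSq (ψ v))]; exact Finset.sum_comm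
  have hX : ∑ e, ∑ c, Complex.normSq (x (mK k c e)) = ∑ v, Complex.normSq (x v) := by
    rw [sum_mK k (fun v => Complex.normSq (x v))]; exact Finset.sum_comm
  have hPsum : ∑ b, ∑ e, (∑ c, Complex.normSq (ψ (mK k c b))) * (∑ c, Complex.normSq (x (mK k c e)))
      = ∑ v, Complex.normSq (x v) := by
    rw [← Finset.sum_mul_sum, hP, hX, hψ, one_mul]
  have h1 : ‖star x ⬝ᵥ (ptK k (psiM ψ)) *ᵥ x‖ = ∑ v, Complex.normSq (x v) := by
    rw [hS, Complex.norm_real, Real.norm_eq_abs, abs_of_nonneg (Finset.sum_nonneg fun v _ => Complex.normSq_nonneg _)]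
  have h2 := abs_S_le k ψ x
  rw [h1] at h2
  have htot : ∑ b, ∑ e, Complex.normSq (CK k ψ x b e)
      = ∑ b, ∑ e, (∑ c, Complex.normSq (ψ (mK k c b))) * (∑ c, Complex.normSq (x (mK k c e))) := by
    refine le_antisymm (Finset.sum_le_sum fun b _ => Finset.sum_le_sum fun e _ => hterm b e) ?_
    rw [hPsum]; exact h2
  have hper : ∀ b e, Complex.normSq (CK k ψ x b e)
      = (∑ c, Complex.normSq (ψ (mK k c b))) * (∑ c, Complex.normSq (x (mK k c e))) := by
    have h4 := (Finset.sum_eq_sum_iff_of_le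
      (fun b _ => Finset.sum_le_sum fun e _ => hterm b e)).mp htot
    intro b e
    have h5 := (Finset.sum_eq_sum_iff_of_le (fun e _ => hterm b e)).mp (h4 b (Finset.mem_univ b))
    exact h5 e (Finset.mem_univ e)
  obtain ⟨v₀, hv₀⟩ := hx
  have hxe : ∃ c, x (mK k c (fun i => v₀ i.1)) ≠ 0 :=
    ⟨fun i => v₀ i.1, by rw [mK_restrict]; exact hv₀⟩
  have hts : ∀ b, ∃ t : ℂ, ∀ c, ψ (mK k c b) = t * (starRingEnd ℂ) (x (mK k c (fun i => v₀ i.1))) := by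
    intro b
    refine cs_aux_eq _ _ hxe ?_
    simpa [CK, Complex.sq_norm] using hper b (fun i => v₀ i.1)
  choose t ht using hts
  refine ⟨fun c => (starRingEnd ℂ) (x (mK k c (fun i => v₀ i.1))), t, fun v => ?_⟩
  have h6 := ht (fun i => v i.1) (fun i => v i.1)
  rw [mK_restrict] at h6
  rw [h6]; ring


section psdaux
open scoped MatrixOrder

lemma psd_ct {n : Type*} [Fintype n] [DecidableEq n] {A : Matrix n n ℂ}
    (hA : A.PosSemidef) : ∃ B : Matrix n n ℂ, A = Bᴴ * B := by
  obtain ⟨B, hB⟩ := CStarAlgebra.nonneg_iff_eq_star_mul_self.mp hA.nonneg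
  exact ⟨B, hB⟩

end psdaux

lemma trace_psd_pair {n : Type*} [Fintype n] [DecidableEq n] {A B : Matrix n n ℂ}
    (hA : A.PosSemidef) (hB : B.PosSemidef) :
    ∃ r : ℝ, 0 ≤ r ∧ (A * B).trace = (r : ℂ) ∧ (r = 0 → A * B = 0) := by
  obtain ⟨C, rfl⟩ := psd_ct hA
  obtain ⟨D, rfl⟩ := psd_ct hB
  refine ⟨∑ i, ∑ j, Complex.normSq ((C * Dᴴ) i j), ?_, ?_, ?_⟩
  · exact Finset.sum_nonneg fun i _ => Finset.sum_nonneg fun j _ => Complex.normSq_nonneg _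
  · have h2 : ((C * Dᴴ) * (C * Dᴴ)ᴴ).trace
        = ((∑ i, ∑ j, Complex.normSq ((C * Dᴴ) i j) : ℝ) : ℂ) := by
      push_cast
      simp only [Matrix.trace, Matrix.diag, Matrix.mul_apply, Matrix.conjTranspose_apply]
      refine Finset.sum_congr rfl fun i _ => Finset.sum_congr rfl fun j _ => ?_
      rw [RCLike.star_def, Complex.mul_conj]
    rw [← h2]
    have : Cᴴ * C * (Dᴴ * D) = Cᴴ * ((C * Dᴴ) * D) := by
      simp only [Matrix.mul_assoc]
    rw [this, Matrix.trace_mul_comm, Matrix.conjTranspose_mul, Matrix.conjTranspose_conjTranspose]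
    simp only [Matrix.mul_assoc]
  · intro hr
    have hM : C * Dᴴ = 0 := by
      ext i j
      have h0 : Complex.normSq ((C * Dᴴ) i j) = 0 := by
        have hnn : ∀ i ∈ (Finset.univ : Finset n), (0:ℝ) ≤ ∑ j, Complex.normSq ((C * Dᴴ) i j) :=
          fun i _ => Finset.sum_nonneg fun j _ => Complex.normSq_nonneg _
        have hrow := (Finset.sum_eq_zero_iff_of_nonneg hnn).mp hr i (Finset.mem_univ i)
        have hnn2 : ∀ j ∈ (Finset.univ : Finset n), (0:ℝ) ≤ Complex.normSq ((C * Dᴴ) i j) :=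
          fun j _ => Complex.normSq_nonneg _
        exact (Finset.sum_eq_zero_iff_of_nonneg hnn2).mp hrow j (Finset.mem_univ j)
      simpa using Complex.normSq_eq_zero.mp h0
    have : Cᴴ * C * (Dᴴ * D) = Cᴴ * ((C * Dᴴ) * D) := by simp only [Matrix.mul_assoc]
    rw [this, hM, Matrix.zero_mul, Matrix.mul_zero]

lemma psd_diag_ne {n : Type*} [Fintype n] [DecidableEq n] {B : Matrix n n ℂ}
    (hB : B.PosSemidef) (hB0 : B ≠ 0) : ∃ v, B v v ≠ 0 := by
  by_contra h
  push_neg at h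
  obtain ⟨D, rfl⟩ := psd_ct hB
  refine hB0 ?_
  have hD : D = 0 := by
    ext c v
    have h0 := h v
    simp only [Matrix.mul_apply, Matrix.conjTranspose_apply] at h0
    have : ∑ c, Complex.normSq (D c v) = 0 := by
      have h1 := congrArg Complex.re h0
      rw [Complex.re_sum, Complex.zero_re] at h1
      rw [show ∑ c, Complex.normSq (D c v) = ∑ i, (star (D i v) * D i v).re from
        Finset.sum_congr rfl fun c _ => by
          rw [RCLike.star_def, mul_comm, Complex.mul_conj, Complex.ofReal_re]]
      exact h1
    have := (Finset.sum_eq_zero_iff_of_nonneg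
      (fun c _ => Complex.normSq_nonneg (D c v))).mp this c (Finset.mem_univ c)
    simpa using Complex.normSq_eq_zero.mp this
  rw [hD]
  simp

end aux

theorem stmt6 (N : ℕ) (hN : 2 ≤ N) (d : Fin N → ℕ) (hd : ∀ i, 1 ≤ d i)
    (ψ : (∀ i, Fin (d i)) → ℂ) (hψ : ∑ v, Complex.normSq (ψ v) = 1)
    (hGME : ∀ k : Fin N → Bool, k ≠ (fun _ => false) → k ≠ (fun _ => true) →
      ¬ ProductAcross k ψ)
    (ϱ : (Fin N → Bool) → Matrix (∀ i, Fin (d i)) (∀ i, Fin (d i)) ℂ)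
    (hϱ : ∀ k, (ϱ k).PosSemidef)
    (Ψ : Matrix (∀ i, Fin (d i)) (∀ i, Fin (d i)) ℂ)
    (hΨ : ∀ v w, Ψ v w = ψ v * (starRingEnd ℂ) (ψ w))
    (hsum : Ψ = ∑ k : Fin N → Bool, ptK k (ϱ k)) :
    (∀ k : Fin N → Bool, k ≠ (fun _ => false) → k ≠ (fun _ => true) → ϱ k = 0) ∧
    ∃ p : ℝ, 0 ≤ p ∧ p ≤ 1 ∧
      ϱ (fun _ => false) = ((p : ℝ) : ℂ) • Ψ ∧
      ϱ (fun _ => true) = (((1 - p : ℝ)) : ℂ) • Ψᵀ := by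
  classical
  have hΨm : Ψ = psiM ψ := Matrix.ext fun v w => hΨ v w
  subst hΨm
  have hψC : (∑ v, (ψ v * (starRingEnd ℂ) (ψ v))) = 1 := by
    rw [Finset.sum_congr rfl fun v _ => Complex.mul_conj (ψ v), ← Complex.ofReal_sum, hψ,
      Complex.ofReal_one]
  have hψC' : (∑ v, ((starRingEnd ℂ) (ψ v) * ψ v)) = 1 := by
    rw [Finset.sum_congr rfl fun v _ => mul_comm ((starRingEnd ℂ) (ψ v)) (ψ v)]
    exact hψC
  have htraceΨ : (psiM ψ).trace = 1 := by
    simp only [Matrix.trace, Matrix.diag, psiM, Matrix.of_apply]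
    exact hψC
  have htraceΨ2 : ((psiM ψ) * (psiM ψ)).trace = 1 := by
    simp only [Matrix.trace, Matrix.diag, Matrix.mul_apply, psiM, Matrix.of_apply]
    have hterm : ∀ v w : (∀ i, Fin (d i)),
        ψ v * (starRingEnd ℂ) (ψ w) * (ψ w * (starRingEnd ℂ) (ψ v))
          = (ψ v * (starRingEnd ℂ) (ψ v)) * (ψ w * (starRingEnd ℂ) (ψ w)) := fun v w => by ring
    rw [Finset.sum_congr rfl fun v _ => Finset.sum_congr rfl fun w _ => hterm v w]
    rw [← Finset.sum_mul_sum, hψC, one_mul]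
  -- fixed point property
  have hfix : ∀ k, ptK k (psiM ψ) * ϱ k = ϱ k := by
    have hpsd1 : ∀ k : Fin N → Bool,
        ((1 : Matrix (∀ i, Fin (d i)) (∀ i, Fin (d i)) ℂ) - ptK k (psiM ψ)).PosSemidef :=
      fun k => one_sub_psd k ψ hψ
    choose r hr0 hrtr hrzero using fun k => trace_psd_pair (hpsd1 k) (hϱ k)
    have hΨtr : ∑ k, (ϱ k).trace = 1 := by
      have h := congrArg Matrix.trace hsum
      rw [Matrix.trace_sum, htraceΨ] at h
      rw [Finset.sum_congr rfl fun k _ => (ptK_trace k (ϱ k)).symm]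
      exact h.symm
    have hΦtr : ∑ k, (ptK k (psiM ψ) * ϱ k).trace = 1 := by
      rw [Finset.sum_congr rfl fun k _ => (trace_mul_ptK k (psiM ψ) (ϱ k)).symm]
      rw [← Matrix.trace_sum, ← Matrix.mul_sum, ← hsum, htraceΨ2]
    have hsumz : ∑ k, ((1 - ptK k (psiM ψ)) * ϱ k).trace = 0 := by
      have hstep : ∀ k : Fin N → Bool, ((1 - ptK k (psiM ψ)) * ϱ k).trace
          = (ϱ k).trace - (ptK k (psiM ψ) * ϱ k).trace := fun k => by
        rw [Matrix.sub_mul, Matrix.one_mul, Matrix.trace_sub]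
      rw [Finset.sum_congr rfl fun k _ => hstep k, Finset.sum_sub_distrib, hΨtr, hΦtr, sub_self]
    have hrsum : ∑ k, r k = 0 := by
      rw [Finset.sum_congr rfl fun k _ => hrtr k, ← Complex.ofReal_sum] at hsumz
      exact_mod_cast hsumz
    have hr0' : ∀ k, r k = 0 := fun k =>
      (Finset.sum_eq_zero_iff_of_nonneg (fun k _ => hr0 k)).mp hrsum k (Finset.mem_univ k)
    intro k
    have h := hrzero k (hr0' k)
    rw [Matrix.sub_mul, Matrix.one_mul, sub_eq_zero] at h
    exact h.symm
  -- part 1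
  have hzero : ∀ k : Fin N → Bool, k ≠ (fun _ => false) → k ≠ (fun _ => true) → ϱ k = 0 := by
    intro k hkf hkt
    by_contra hne
    obtain ⟨v₀, hv₀⟩ := psd_diag_ne (hϱ k) hne
    have hfx : ptK k (psiM ψ) *ᵥ (fun w => ϱ k w v₀) = (fun w => ϱ k w v₀) := by
      funext w
      have h := congrFun (congrFun (hfix k) w) v₀
      simpa [Matrix.mulVec, Matrix.mul_apply, dotProduct] using h
    refine hGME k hkf hkt ?_
    refine product_of_saturation k ψ (fun w => ϱ k w v₀) hψ ⟨v₀, hv₀⟩ ?_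
    rw [hfx, dot_star_self]
  refine ⟨hzero, ?_⟩
  -- part 2
  have hkfkt : ((fun _ => false) : Fin N → Bool) ≠ (fun _ => true) := by
    intro h
    have := congrFun h ⟨0, by omega⟩
    simp at this
  have hptkf : ptK (fun _ => false) (ϱ (fun _ => false)) = ϱ (fun _ => false) := by
    funext v w; simp [ptK]
  have hptkt : ptK (fun _ => true) (ϱ (fun _ => true)) = (ϱ (fun _ => true))ᵀ := by
    funext v w; simp [ptK, Matrix.transpose_apply]
  have hsplit : psiM ψ = ϱ (fun _ => false) + (ϱ (fun _ => true))ᵀ := by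
    have hothers : ∀ k ∈ (Finset.univ : Finset (Fin N → Bool)),
        k ∉ ({(fun _ => false), (fun _ => true)} : Finset (Fin N → Bool)) → ptK k (ϱ k) = 0 := by
      intro k _ hk
      simp only [Finset.mem_insert, Finset.mem_singleton, not_or] at hk
      rw [hzero k hk.1 hk.2]
      funext v w; simp [ptK]
    rw [hsum, ← Finset.sum_subset (Finset.subset_univ _) hothers, Finset.sum_pair hkfkt,
      hptkf, hptkt]
  have hApsd := hϱ (fun _ => false)
  have hBpsd : ((ϱ (fun _ => true))ᵀ).PosSemidef := (hϱ _).transpose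
  obtain ⟨w₀, hw₀⟩ : ∃ v, ψ v ≠ 0 := by
    by_contra hc
    push_neg at hc
    have h0 : ∑ v, Complex.normSq (ψ v) = 0 :=
      Finset.sum_eq_zero fun v _ => by rw [hc v, map_zero]
    rw [h0] at hψ
    norm_num at hψ
  have hptkfΨ : ptK (fun _ => false) (psiM ψ) = psiM ψ := by
    funext v w; simp [ptK]
  have hAfix : psiM ψ * ϱ (fun _ => false) = ϱ (fun _ => false) := by
    have h := hfix (fun _ => false)
    rwa [hptkfΨ] at h
  set g : (∀ i, Fin (d i)) → ℂ :=
    fun w => ∑ u, (starRingEnd ℂ) (ψ u) * ϱ (fun _ => false) u w with hg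
  have hAvw : ∀ v w, ϱ (fun _ => false) v w = ψ v * g w := by
    intro v w
    have h := congrFun (congrFun hAfix v) w
    rw [← h]
    show (psiM ψ * ϱ (fun _ => false)) v w = _
    rw [Matrix.mul_apply, hg, Finset.mul_sum]
    exact Finset.sum_congr rfl fun u _ => by
      show ψ v * (starRingEnd ℂ) (ψ u) * ϱ (fun _ => false) u w = _
      ring
  have hAH := hApsd.1
  have hgEq : ∀ v w, ψ v * g w = (starRingEnd ℂ) (ψ w) * (starRingEnd ℂ) (g v) := by
    intro v w
    have h1 := hAvw v w
    have h2 := hAvw w v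
    have h3 : (starRingEnd ℂ) (ϱ (fun _ => false) w v) = ϱ (fun _ => false) v w := hAH.apply v w
    rw [← h1, ← h3, h2, _root_.map_mul]
  set c0 : ℂ := (starRingEnd ℂ) (g w₀) / ψ w₀ with hc0
  have hgw : ∀ w, g w = c0 * (starRingEnd ℂ) (ψ w) := by
    intro w
    have h := hgEq w₀ w
    rw [hc0]
    field_simp
    linear_combination h
  have hAc : ϱ (fun _ => false) = c0 • psiM ψ := by
    refine Matrix.ext fun v w => ?_
    rw [hAvw v w, hgw w]
    show _ = c0 * (ψ v * (starRingEnd ℂ) (ψ w))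
    ring
  have hqψ : star ψ ⬝ᵥ (psiM ψ) *ᵥ ψ = 1 := by
    simp only [dotProduct, mulVec, psiM, Matrix.of_apply, Pi.star_apply, RCLike.star_def,
      Finset.mul_sum]
    have hterm : ∀ v w : (∀ i, Fin (d i)),
        (starRingEnd ℂ) (ψ v) * (ψ v * (starRingEnd ℂ) (ψ w) * ψ w)
          = ((starRingEnd ℂ) (ψ v) * ψ v) * ((starRingEnd ℂ) (ψ w) * ψ w) := fun v w => by ring
    rw [Finset.sum_congr rfl fun v _ => Finset.sum_congr rfl fun w _ => hterm v w,
      ← Finset.sum_mul_sum, hψC', one_mul]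
  have hc0val : star ψ ⬝ᵥ ϱ (fun _ => false) *ᵥ ψ = c0 := by
    rw [hAc, Matrix.smul_mulVec, dotProduct_smul, hqψ, smul_eq_mul, mul_one]
  have hc0nonneg : 0 ≤ c0 := by
    rw [← hc0val]; exact hApsd.dotProduct_mulVec_nonneg ψ
  have hBm : (ϱ (fun _ => true))ᵀ = psiM ψ - ϱ (fun _ => false) :=
    eq_sub_of_add_eq' hsplit.symm
  have hc1val : star ψ ⬝ᵥ (ϱ (fun _ => true))ᵀ *ᵥ ψ = 1 - c0 := by
    rw [hBm, Matrix.sub_mulVec, dotProduct_sub, hqψ, hc0val]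
  have hc1nonneg : 0 ≤ 1 - c0 := by
    rw [← hc1val]; exact hBpsd.dotProduct_mulVec_nonneg ψ
  have him : c0.im = 0 := by
    have := (Complex.le_def.mp hc0nonneg).2
    simpa using this.symm
  have hre : 0 ≤ c0.re := by
    have := (Complex.le_def.mp hc0nonneg).1
    simpa using this
  have hre1 : c0.re ≤ 1 := by
    have := (Complex.le_def.mp hc1nonneg).1
    simp only [Complex.zero_re, Complex.sub_re, Complex.one_re] at this
    linarith
  have hc0eq : c0 = ((c0.re : ℝ) : ℂ) := by
    exact (Complex.conj_eq_iff_re.mp (Complex.conj_eq_iff_im.mpr him)).symm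
  refine ⟨c0.re, hre, hre1, ?_, ?_⟩
  · rw [hAc]
    exact congrArg (fun z => z • psiM ψ) hc0eq
  · have hB' : (ϱ (fun _ => true))ᵀ = (1 - c0) • psiM ψ := by
      rw [hBm, hAc, sub_smul, one_smul]
    have htr := congrArg Matrix.transpose hB'
    rw [Matrix.transpose_transpose, Matrix.transpose_smul] at htr
    have h9 : (1 : ℂ) - c0 = (((1 - c0.re : ℝ)) : ℂ) := by
      conv_lhs => rw [hc0eq]
      push_cast
      ring
    rw [htr]
    exact congrArg (fun z => z • (psiM ψ)ᵀ) h9
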